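/- arXiv:2308.06800 — 2 statements merged into one kernel-verified Lean document; each statement's English description precedes it below -/
import Mathlib

section
/- Let q be a complex number with 0 < |q| < 1, and let a be a nonzero complex number with |a| < 1. Then ∑_{n=0}^{∞} (2n+1)·(q/a;q)_n·a^n/(a;q)_{n+1} = (q;q)_∞^3·(a^2;q)_∞/(a;q)_∞^4. -/
/-- The finite q-Pochhammer symbol `(a;q)_n = ∏_{k=0}^{n-1} (1 - a q^k)`. -/
noncomputable def qPoch (a q : ℂ) (n : ℕ) : ℂ := ∏ k ∈ Finset.range n, (1 - a * q ^ k)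

/-- The infinite q-Pochhammer symbol `(a;q)_∞ = ∏_{k=0}^{∞} (1 - a q^k)`. -/
noncomputable def qPochInf (a q : ℂ) : ℂ := ∏' k : ℕ, (1 - a * q ^ k)


open Finset Filter Topology

-- Lemma 1: shift
lemma qPoch_succ_shift (b q : ℂ) (n : ℕ) :
    qPoch b q (n + 1) = (1 - b) * qPoch (b * q) q n := by
  unfold qPoch
  rw [Finset.prod_range_succ', pow_zero, mul_one, mul_comm]
  congr 1
  refine Finset.prod_congr rfl fun k _ => ?_
  ring

-- Lemma 2: numerator rewrite
lemma qPoch_div_mul_pow (b q : ℂ) (hb : b ≠ 0) (n : ℕ) :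
    qPoch (q / b) q n * b ^ n = ∏ k ∈ Finset.range n, (b - q ^ (k + 1)) := by
  unfold qPoch
  have : b ^ n = ∏ _k ∈ Finset.range n, b := by simp
  rw [this, ← Finset.prod_mul_distrib]
  refine Finset.prod_congr rfl fun k _ => ?_
  field_simp
  ring

-- Lemma 3: real product lower bound by 1 - sum
lemma one_sub_sum_le_prod_one_sub (t : Finset ℕ) (y : ℕ → ℝ)
    (h0 : ∀ k ∈ t, 0 ≤ y k) (h1 : ∀ k ∈ t, y k ≤ 1) :
    1 - ∑ k ∈ t, y k ≤ ∏ k ∈ t, (1 - y k) := by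
  induction t using Finset.induction_on with
  | empty => simp
  | insert _ _ ha ih =>
    rename_i a s
    rw [Finset.prod_insert ha, Finset.sum_insert ha]
    have h0' : ∀ k ∈ s, 0 ≤ y k := fun k hk => h0 k (Finset.mem_insert_of_mem hk)
    have h1' : ∀ k ∈ s, y k ≤ 1 := fun k hk => h1 k (Finset.mem_insert_of_mem hk)
    have hya : 0 ≤ y a := h0 a (Finset.mem_insert_self a s)
    have hya1 : y a ≤ 1 := h1 a (Finset.mem_insert_self a s)
    have hs : 0 ≤ ∑ k ∈ s, y k := Finset.sum_nonneg h0'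
    nlinarith [ih h0' h1', Finset.sum_nonneg h0']

-- bound: ‖∏ (1+x k) - 1‖ ≤ ∏ (1+‖x k‖) - 1
lemma norm_prod_one_add_sub_one (t : Finset ℕ) (x : ℕ → ℂ) :
    ‖(∏ k ∈ t, (1 + x k)) - 1‖ ≤ (∏ k ∈ t, (1 + ‖x k‖)) - 1 := by
  induction t using Finset.induction_on with
  | empty => simp
  | insert _ _ ha ih =>
    rename_i a s
    rw [Finset.prod_insert ha, Finset.prod_insert ha]
    have key : (1 + x a) * ∏ k ∈ s, (1 + x k) - 1
        = (1 + x a) * ((∏ k ∈ s, (1 + x k)) - 1) + x a := by ring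
    rw [key]
    have h1 : ‖(1 + x a) * ((∏ k ∈ s, (1 + x k)) - 1) + x a‖
        ≤ ‖1 + x a‖ * ‖(∏ k ∈ s, (1 + x k)) - 1‖ + ‖x a‖ := by
      refine (norm_add_le _ _).trans ?_
      rw [norm_mul]
    refine h1.trans ?_
    have h2 : ‖(1:ℂ) + x a‖ ≤ 1 + ‖x a‖ := (norm_add_le _ _).trans (by simp)
    have h3 : (0:ℝ) ≤ ‖(∏ k ∈ s, (1 + x k)) - 1‖ := norm_nonneg _
    have h4 : (1:ℝ) ≤ ∏ k ∈ s, (1 + ‖x k‖) := by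
      have := Finset.prod_le_prod (s := s) (f := fun _ => (1:ℝ)) (g := fun k => 1 + ‖x k‖)
        (fun k _ => zero_le_one) (fun k _ => by simpa using norm_nonneg (x k))
      simpa using this
    nlinarith [ih, norm_nonneg (x a)]

lemma prod_one_add_le_exp (t : Finset ℕ) (y : ℕ → ℝ) (hy : ∀ k, 0 ≤ y k) :
    ∏ k ∈ t, (1 + y k) ≤ Real.exp (∑ k ∈ t, y k) := by
  rw [Real.exp_sum]
  exact Finset.prod_le_prod (fun k _ => by linarith [hy k]) fun k _ => by
    have := Real.add_one_le_exp (y k); linarith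

lemma hasProd_one_add {x : ℕ → ℂ} (hx : Summable fun k => ‖x k‖) :
    ∃ P : ℂ, HasProd (fun k => 1 + x k) P ∧
      Tendsto (fun n => ∏ k ∈ Finset.range n, (1 + x k)) atTop (𝓝 P) := by
  set f : ℕ → ℂ := fun k => 1 + x k with hf
  set T : ℝ := ∑' k, ‖x k‖ with hT
  have hxnn : ∀ k, (0:ℝ) ≤ ‖x k‖ := fun k => norm_nonneg _
  have hsum_le : ∀ t : Finset ℕ, ∑ k ∈ t, ‖x k‖ ≤ T :=
    fun t => Summable.sum_le_tsum t (fun k _ => hxnn k) hx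
  -- uniform bound on all finite products
  have hM : ∀ t : Finset ℕ, ‖∏ k ∈ t, f k‖ ≤ Real.exp T := by
    intro t
    calc ‖∏ k ∈ t, f k‖ = ∏ k ∈ t, ‖f k‖ := by
          simp [norm_prod]
      _ ≤ ∏ k ∈ t, (1 + ‖x k‖) :=
          Finset.prod_le_prod (fun k _ => norm_nonneg _)
            (fun k _ => (norm_add_le _ _).trans (by simp))
      _ ≤ Real.exp (∑ k ∈ t, ‖x k‖) := prod_one_add_le_exp t _ hxnn
      _ ≤ Real.exp T := Real.exp_le_exp.2 (hsum_le t)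
  -- tail sums
  set tail : ℕ → ℝ := fun j => ∑' k, ‖x (k + j)‖ with htaildef
  have htail : Tendsto tail atTop (𝓝 0) := by
    rw [htaildef]; exact tendsto_sum_nat_add (fun k => ‖x k‖)
  -- key estimate for finsets of large indices
  have key : ∀ (N : ℕ) (t : Finset ℕ), (∀ k ∈ t, N ≤ k) →
      ‖(∏ k ∈ t, f k) - 1‖ ≤ Real.exp (tail N) - 1 := by
    intro N t ht
    have h1 : ‖(∏ k ∈ t, f k) - 1‖ ≤ (∏ k ∈ t, (1 + ‖x k‖)) - 1 :=
      norm_prod_one_add_sub_one t x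
    have h2 : ∑ k ∈ t, ‖x k‖ ≤ tail N := by
      obtain ⟨B, hB⟩ := t.exists_nat_subset_range
      have hsub : t ⊆ Finset.Ico N (max B N) := by
        intro k hk
        simp only [Finset.mem_Ico]
        refine ⟨ht k hk, lt_of_lt_of_le (Finset.mem_range.1 (hB hk)) (le_max_left _ _)⟩
      calc ∑ k ∈ t, ‖x k‖ ≤ ∑ k ∈ Finset.Ico N (max B N), ‖x k‖ :=
            Finset.sum_le_sum_of_subset_of_nonneg hsub (fun k _ _ => hxnn k)
        _ = ∑ i ∈ Finset.range (max B N - N), ‖x (N + i)‖ := by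
            rw [Finset.sum_Ico_eq_sum_range]
        _ ≤ tail N := by
            have h5 := Summable.sum_le_tsum (f := fun k => ‖x (k + N)‖)
              (Finset.range (max B N - N)) (fun k _ => hxnn _)
              ((summable_nat_add_iff N).2 hx)
            rw [htaildef]
            simpa [add_comm] using h5
    have h3 : (∏ k ∈ t, (1 + ‖x k‖)) ≤ Real.exp (tail N) :=
      (prod_one_add_le_exp t _ hxnn).trans (Real.exp_le_exp.2 h2)
    linarith
  -- partial products are Cauchy
  set p : ℕ → ℂ := fun n => ∏ k ∈ Finset.range n, f k with hp
  have hdistb : ∀ n m N : ℕ, N ≤ n → N ≤ m →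
      dist (p n) (p m) ≤ Real.exp T * (Real.exp (tail N) - 1) := by
    have base : ∀ n m N : ℕ, N ≤ n → n ≤ m →
        dist (p n) (p m) ≤ Real.exp T * (Real.exp (tail N) - 1) := by
      intro n m N hNn hnm
      have hsplit : p m = p n * ∏ k ∈ Finset.Ico n m, f k :=
        (Finset.prod_range_mul_prod_Ico f hnm).symm
      have heq : dist (p n) (p m) = ‖p n * ((∏ k ∈ Finset.Ico n m, f k) - 1)‖ := by
        rw [dist_eq_norm', hsplit]
        congr 1
        ring
      rw [heq, norm_mul]
      have h1 := key N (Finset.Ico n m) (fun k hk => hNn.trans (Finset.mem_Ico.1 hk).1)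
      have h2 := hM (Finset.range n)
      have h3 : (0:ℝ) ≤ ‖(∏ k ∈ Finset.Ico n m, f k) - 1‖ := norm_nonneg _
      have h4 : (0:ℝ) ≤ ‖p n‖ := norm_nonneg _
      exact mul_le_mul h2 h1 h3 (Real.exp_pos T).le
    intro n m N hn hm
    rcases le_total n m with h | h
    · exact base n m N hn h
    · rw [dist_comm]; exact base m n N hm h
  have hcauchy : CauchySeq p :=
    cauchySeq_of_le_tendsto_0 _ (fun n m N hn hm => hdistb n m N hn hm)
      (by
        have : Tendsto (fun N => Real.exp (tail N) - 1) atTop (𝓝 (Real.exp 0 - 1)) :=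
          ((Real.continuous_exp.tendsto 0).comp htail).sub tendsto_const_nhds
        simpa using this.const_mul (Real.exp T))
  obtain ⟨P, hP⟩ := cauchySeq_tendsto_of_complete hcauchy
  refine ⟨P, ?_, hP⟩
  rw [HasProd]
  rw [SummationFilter.unconditional_filter, tendsto_atTop']
  intro U hU
  obtain ⟨ε, hε, hball⟩ := Metric.mem_nhds_iff.1 hU
  have hto0 : Tendsto (fun N => Real.exp T * (Real.exp (tail N) - 1) + dist (p N) P)
      atTop (𝓝 0) := by
    have h1 : Tendsto (fun N => Real.exp T * (Real.exp (tail N) - 1)) atTop (𝓝 0) := by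
      have : Tendsto (fun N => Real.exp (tail N) - 1) atTop (𝓝 (Real.exp 0 - 1)) :=
        ((Real.continuous_exp.tendsto 0).comp htail).sub tendsto_const_nhds
      simpa using this.const_mul (Real.exp T)
    have h2 : Tendsto (fun N => dist (p N) P) atTop (𝓝 0) :=
      tendsto_iff_dist_tendsto_zero.1 hP
    simpa using h1.add h2
  have hev : ∀ᶠ N in atTop,
      Real.exp T * (Real.exp (tail N) - 1) + dist (p N) P < ε := by
    exact (tendsto_order.1 hto0).2 ε hε
  obtain ⟨N, hN⟩ := hev.exists
  refine ⟨Finset.range N, fun s hs => ?_⟩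
  apply hball
  rw [Metric.mem_ball]
  have hsplit : ∏ k ∈ s, f k = (∏ k ∈ s \ Finset.range N, f k) * p N := by
    rw [hp]
    exact (Finset.prod_sdiff hs).symm
  have h1 : dist (∏ k ∈ s, f k) (p N) ≤ Real.exp T * (Real.exp (tail N) - 1) := by
    rw [dist_eq_norm, hsplit]
    have : (∏ k ∈ s \ Finset.range N, f k) * p N - p N
        = p N * ((∏ k ∈ s \ Finset.range N, f k) - 1) := by ring
    rw [this, norm_mul]
    have h2 := key N (s \ Finset.range N) (fun k hk => by
      have := (Finset.mem_sdiff.1 hk).2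
      simpa using Nat.le_of_not_lt (fun h => this (Finset.mem_range.2 h)))
    exact mul_le_mul (hM _) h2 (norm_nonneg _) (Real.exp_pos T).le
  calc dist (∏ k ∈ s, f k) P ≤ dist (∏ k ∈ s, f k) (p N) + dist (p N) P :=
        dist_triangle _ _ _
    _ ≤ Real.exp T * (Real.exp (tail N) - 1) + dist (p N) P := by linarith
    _ < ε := hN

-- Lemma 4: uniform lower bound on |qPoch b q n| for ‖b‖ ≤ r < 1, ‖q‖ < 1
lemma qPoch_lower_bound {q : ℂ} (hq1 : ‖q‖ < 1) {r : ℝ} (hr0 : 0 ≤ r) (hr1 : r < 1) :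
    ∃ c : ℝ, 0 < c ∧ ∀ (b : ℂ), ‖b‖ ≤ r → ∀ n, c ≤ ‖qPoch b q n‖ := by
  set y : ℕ → ℝ := fun k => r * ‖q‖ ^ k with hy
  have hynn : ∀ k, 0 ≤ y k := fun k => by positivity
  have hy1 : ∀ k, y k < 1 := fun k => by
    have h1 : ‖q‖ ^ k ≤ 1 := pow_le_one₀ (norm_nonneg q) hq1.le
    have : y k ≤ r * 1 := by
      rw [hy]
      exact mul_le_mul_of_nonneg_left h1 hr0
    linarith
  have hsy : Summable y := (summable_geometric_of_lt_one (norm_nonneg q) hq1).mul_left r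
  -- choose K with tail ≤ 1/2
  have htail : Tendsto (fun j => ∑' k, y (k + j)) atTop (𝓝 0) := tendsto_sum_nat_add y
  obtain ⟨K, hK⟩ := (Filter.eventually_atTop.1
    ((tendsto_order.1 htail).2 (1/2) (by norm_num))).imp (fun K h => h K le_rfl)
  refine ⟨(∏ k ∈ Finset.range K, (1 - y k)) * (1/2), by
    apply mul_pos
    · exact Finset.prod_pos fun k _ => by linarith [hy1 k]
    · norm_num, ?_⟩
  intro b hb n
  -- pointwise factor bound : 1 - y k ≤ ‖1 - b q^k‖
  have hfac : ∀ k, 1 - y k ≤ ‖(1:ℂ) - b * q ^ k‖ := by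
    intro k
    have h1 : ‖b * q ^ k‖ ≤ y k := by
      rw [norm_mul, norm_pow, hy]
      exact mul_le_mul_of_nonneg_right hb (by positivity)
    have := norm_sub_norm_le (1:ℂ) (b * q ^ k)
    simp only [norm_one] at this
    linarith
  have hreal : ∀ m, (∏ k ∈ Finset.range m, (1 - y k)) ≤ ‖qPoch b q m‖ := by
    intro m
    unfold qPoch
    rw [norm_prod]
    exact Finset.prod_le_prod (fun k _ => by linarith [hy1 k]) (fun k _ => hfac k)
  refine le_trans ?_ (hreal n)
  -- show c ≤ ∏_{k<n} (1 - y k)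
  rcases le_total n K with h | h
  · have hmono : (∏ k ∈ Finset.range K, (1 - y k)) ≤ ∏ k ∈ Finset.range n, (1 - y k) := by
      rw [← Finset.prod_range_mul_prod_Ico _ h]
      have h1 : (∏ k ∈ Finset.Ico n K, (1 - y k)) ≤ 1 :=
        Finset.prod_le_one (fun k _ => by linarith [hy1 k]) (fun k _ => by linarith [hynn k])
      have h2 : (0:ℝ) ≤ ∏ k ∈ Finset.range n, (1 - y k) :=
        Finset.prod_nonneg fun k _ => by linarith [hy1 k]
      nlinarith [Finset.prod_nonneg (s := Finset.Ico n K)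
        (f := fun k => 1 - y k) (fun k hk => by linarith [hy1 k])]
    have h2 : (0:ℝ) ≤ ∏ k ∈ Finset.range K, (1 - y k) :=
      Finset.prod_nonneg fun k _ => by linarith [hy1 k]
    nlinarith
  · rw [← Finset.prod_range_mul_prod_Ico _ h]
    have h1 : (1:ℝ) - ∑ k ∈ Finset.Ico K n, y k ≤ ∏ k ∈ Finset.Ico K n, (1 - y k) :=
      one_sub_sum_le_prod_one_sub _ _ (fun k _ => hynn k) (fun k _ => (hy1 k).le)
    have h2 : ∑ k ∈ Finset.Ico K n, y k ≤ 1/2 := by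
      have h3 : ∑ k ∈ Finset.Ico K n, y k = ∑ i ∈ Finset.range (n - K), y (K + i) := by
        rw [Finset.sum_Ico_eq_sum_range]
      have h4 := Summable.sum_le_tsum (f := fun k => y (k + K)) (Finset.range (n - K))
        (fun k _ => hynn _) ((summable_nat_add_iff K).2 hsy)
      rw [h3]
      have h5 : ∑ i ∈ Finset.range (n - K), y (K + i) = ∑ i ∈ Finset.range (n - K), y (i + K) := by
        refine Finset.sum_congr rfl fun i _ => by rw [add_comm]
      rw [h5]
      linarith [hK.le]
    have h6 : (0:ℝ) ≤ ∏ k ∈ Finset.range K, (1 - y k) :=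
      Finset.prod_nonneg fun k _ => by linarith [hy1 k]
    nlinarith

-- Lemma 5: uniform upper bound on the numerator products
lemma num_upper_bound {q : ℂ} (hq1 : ‖q‖ < 1) {r : ℝ} (hr0 : 0 < r) :
    ∃ M : ℝ, 0 < M ∧ ∀ (b : ℂ), ‖b‖ ≤ r → ∀ n,
      ‖∏ k ∈ Finset.range n, (b - q ^ (k + 1))‖ ≤ M * r ^ n := by
  set T : ℝ := ∑' k : ℕ, ‖q‖ ^ (k + 1) with hT
  have hsq : Summable (fun k : ℕ => ‖q‖ ^ (k + 1)) := by
    have := (summable_geometric_of_lt_one (norm_nonneg q) hq1).mul_left ‖q‖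
    refine this.congr fun k => ?_
    rw [pow_succ, mul_comm]
  refine ⟨Real.exp (T / r), Real.exp_pos _, ?_⟩
  intro b hb n
  calc ‖∏ k ∈ Finset.range n, (b - q ^ (k + 1))‖
      = ∏ k ∈ Finset.range n, ‖b - q ^ (k + 1)‖ := norm_prod _ _
    _ ≤ ∏ k ∈ Finset.range n, (r + ‖q‖ ^ (k + 1)) := by
        refine Finset.prod_le_prod (fun k _ => norm_nonneg _) (fun k _ => ?_)
        refine (norm_sub_le _ _).trans ?_
        gcongr
        rw [norm_pow]
    _ = ∏ k ∈ Finset.range n, (r * (1 + ‖q‖ ^ (k + 1) / r)) := by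
        refine Finset.prod_congr rfl fun k _ => ?_
        field_simp
    _ = r ^ n * ∏ k ∈ Finset.range n, (1 + ‖q‖ ^ (k + 1) / r) := by
        rw [Finset.prod_mul_distrib, Finset.prod_const, Finset.card_range]
    _ ≤ r ^ n * Real.exp (T / r) := by
        refine mul_le_mul_of_nonneg_left ?_ (by positivity)
        refine (prod_one_add_le_exp _ _ (fun k => by positivity)).trans ?_
        rw [Real.exp_le_exp]
        have h1 : ∑ k ∈ Finset.range n, ‖q‖ ^ (k + 1) / r
            = (∑ k ∈ Finset.range n, ‖q‖ ^ (k + 1)) / r := by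
          rw [Finset.sum_div]
        rw [h1]
        have h2 : ∑ k ∈ Finset.range n, ‖q‖ ^ (k + 1) ≤ T :=
          Summable.sum_le_tsum _ (fun k _ => by positivity) hsq
        exact div_le_div_of_nonneg_right h2 hr0.le |>.trans_eq rfl
    _ = Real.exp (T / r) * r ^ n := mul_comm _ _

noncomputable def uTerm (q b : ℂ) (n : ℕ) : ℂ :=
  (2 * (n : ℂ) + 1) * qPoch (q / b) q n * b ^ n / qPoch b q (n + 1)

lemma uTerm_eq {q b : ℂ} (hb : b ≠ 0) (n : ℕ) :
    uTerm q b n = (2 * (n : ℂ) + 1) * (∏ k ∈ Finset.range n, (b - q ^ (k + 1)))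
      / qPoch b q (n + 1) := by
  unfold uTerm
  rw [← qPoch_div_mul_pow b q hb n]
  ring

lemma summable_bound {r : ℝ} (hr1 : r < 1) (hr0 : 0 ≤ r) (C : ℝ) :
    Summable (fun n : ℕ => (2 * (n:ℝ) + 1) * C * r ^ n) := by
  have h1 : Summable (fun n : ℕ => (n:ℝ) * r ^ n) := by
    have := summable_pow_mul_geometric_of_norm_lt_one 1 (by
      rwa [Real.norm_eq_abs, abs_of_nonneg hr0] : ‖r‖ < 1)
    simpa using this
  have h2 : Summable (fun n : ℕ => r ^ n) := summable_geometric_of_lt_one hr0 hr1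
  have h3 : Summable (fun n : ℕ => 2 * ((n:ℝ) * r ^ n) + r ^ n) := (h1.mul_left 2).add h2
  have h4 := h3.mul_right C
  refine h4.congr fun n => ?_
  ring

lemma uTerm_bound {q : ℂ} (hq1 : ‖q‖ < 1) {r : ℝ} (hr0 : 0 < r) (hr1 : r < 1)
    {c M : ℝ} (hc : 0 < c)
    (hlow : ∀ (b : ℂ), ‖b‖ ≤ r → ∀ n, c ≤ ‖qPoch b q n‖)
    (hup : ∀ (b : ℂ), ‖b‖ ≤ r → ∀ n, ‖∏ k ∈ Finset.range n, (b - q ^ (k + 1))‖ ≤ M * r ^ n)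
    {b : ℂ} (hb0 : b ≠ 0) (hbr : ‖b‖ ≤ r) (n : ℕ) :
    ‖uTerm q b n‖ ≤ (2 * (n:ℝ) + 1) * (M / c) * r ^ n := by
  rw [uTerm_eq hb0, norm_div, norm_mul]
  have h1 : ‖(2 * (n:ℂ) + 1)‖ = 2 * (n:ℝ) + 1 := by
    have : (2 * (n:ℂ) + 1) = ((2 * (n:ℝ) + 1 : ℝ) : ℂ) := by push_cast; ring
    rw [this, Complex.norm_real, Real.norm_eq_abs, abs_of_nonneg (by positivity)]
  rw [h1]
  have h2 := hup b hbr n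
  have h3 := hlow b hbr (n + 1)
  have h4 : (0:ℝ) < ‖qPoch b q (n+1)‖ := lt_of_lt_of_le hc h3
  rw [div_le_iff₀ h4]
  have h5 : (2 * (n:ℝ) + 1) * (M / c) * r ^ n * ‖qPoch b q (n+1)‖
      ≥ (2 * (n:ℝ) + 1) * (M / c) * r ^ n * c := by
    have hM : 0 ≤ M := by
      have h := hup b hbr 0
      simp only [Finset.range_zero, Finset.prod_empty, norm_one, pow_zero, mul_one] at h
      linarith
    gcongr
  have h6 : (2 * (n:ℝ) + 1) * (M / c) * r ^ n * c = (2 * (n:ℝ) + 1) * (M * r ^ n) := by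
    field_simp
  have h7 : ‖∏ k ∈ Finset.range n, (b - q ^ (k + 1))‖ ≥ 0 := norm_nonneg _
  nlinarith [h2, mul_le_mul_of_nonneg_left h2 (by positivity : (0:ℝ) ≤ 2 * (n:ℝ) + 1)]

lemma summable_uTerm {q : ℂ} (hq1 : ‖q‖ < 1) {b : ℂ} (hb0 : b ≠ 0) (hb1 : ‖b‖ < 1) :
    Summable (uTerm q b) := by
  set r : ℝ := ‖b‖ with hr
  have hr0 : 0 < r := by simpa [hr] using norm_pos_iff.2 hb0
  obtain ⟨c, hc, hlow⟩ := qPoch_lower_bound hq1 hr0.le hb1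
  obtain ⟨M, hM, hup⟩ := num_upper_bound hq1 hr0
  refine Summable.of_norm_bounded (summable_bound hb1 hr0.le (M / c)) ?_
  intro n
  exact uTerm_bound hq1 hr0 hb1 hc hlow hup hb0 le_rfl n

lemma tendsto_S_zero {q : ℂ} (hq1 : ‖q‖ < 1) {r : ℝ} (hr0 : 0 < r) (hr1 : r < 1)
    {bseq : ℕ → ℂ} (hb0 : ∀ j, bseq j ≠ 0) (hbr : ∀ j, ‖bseq j‖ ≤ r)
    (hbl : Tendsto bseq atTop (𝓝 0)) :
    Tendsto (fun j => ∑' n, uTerm q (bseq j) n) atTop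
      (𝓝 (∑' n : ℕ, (2 * (n : ℂ) + 1) * ∏ k ∈ Finset.range n, (0 - q ^ (k + 1)))) := by
  obtain ⟨c, hc, hlow⟩ := qPoch_lower_bound hq1 hr0.le hr1
  obtain ⟨M, hM, hup⟩ := num_upper_bound hq1 hr0
  refine tendsto_tsum_of_dominated_convergence
    (f := fun j n => uTerm q (bseq j) n)
    (bound := fun n => (2 * (n:ℝ) + 1) * (M / c) * r ^ n)
    (summable_bound hr1 hr0.le (M / c)) ?_ ?_
  · intro n
    have heq : ∀ j, uTerm q (bseq j) n
        = (2 * (n : ℂ) + 1) * (∏ k ∈ Finset.range n, (bseq j - q ^ (k + 1)))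
          / qPoch (bseq j) q (n + 1) := fun j => uTerm_eq (hb0 j) n
    simp only [heq]
    have hnum : Tendsto (fun j => ∏ k ∈ Finset.range n, (bseq j - q ^ (k + 1))) atTop
        (𝓝 (∏ k ∈ Finset.range n, (0 - q ^ (k + 1)))) := by
      refine tendsto_finset_prod _ fun k _ => ?_
      exact hbl.sub tendsto_const_nhds
    have hden : Tendsto (fun j => qPoch (bseq j) q (n + 1)) atTop (𝓝 1) := by
      have : Tendsto (fun j => ∏ k ∈ Finset.range (n+1), (1 - bseq j * q ^ k)) atTop
          (𝓝 (∏ k ∈ Finset.range (n+1), (1 - 0 * q ^ k))) := by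
        refine tendsto_finset_prod _ fun k _ => ?_
        exact tendsto_const_nhds.sub (hbl.mul tendsto_const_nhds)
      simpa [qPoch] using this
    have := ((hnum.const_mul (2 * (n : ℂ) + 1)).div hden one_ne_zero)
    simpa [Pi.div_def] using this
  · filter_upwards with j n
    exact uTerm_bound hq1 hr0 hr1 hc hlow hup (hb0 j) (hbr j) n

lemma one_sub_mul_pow_ne {b q : ℂ} (hb : ‖b‖ < 1) (hq : ‖q‖ ≤ 1) (k : ℕ) :
    1 - b * q ^ k ≠ 0 := by
  intro h
  have h1 : b * q ^ k = 1 := by linear_combination -h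
  have h2 : ‖b * q ^ k‖ < 1 := by
    rw [norm_mul, norm_pow]
    calc ‖b‖ * ‖q‖ ^ k ≤ ‖b‖ * 1 := by
          refine mul_le_mul_of_nonneg_left ?_ (norm_nonneg b)
          exact pow_le_one₀ (norm_nonneg q) hq
      _ = ‖b‖ := mul_one _
      _ < 1 := hb
  rw [h1] at h2
  simp at h2

lemma qPoch_ne_zero {b q : ℂ} (hb : ‖b‖ < 1) (hq : ‖q‖ ≤ 1) (n : ℕ) :
    qPoch b q n ≠ 0 :=
  Finset.prod_ne_zero_iff.2 fun k _ => one_sub_mul_pow_ne hb hq k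

noncomputable def Edef (q b : ℂ) : ℕ → ℂ
  | 0 => 0
  | (N+1) => -b * (1-b) * (∏ k ∈ Finset.range N, (b - q^(k+1))) *
      ((2*(N:ℂ)+3) + (2*(N:ℂ)+1)*q^(N+1) - ((2*(N:ℂ)+1) + (2*(N:ℂ)+3)*q^(N+1))*b)
      / qPoch b q (N+2)

lemma key_partial {q b : ℂ} (hq0 : q ≠ 0) (hq1 : ‖q‖ < 1) (hb0 : b ≠ 0) (hb1 : ‖b‖ < 1) :
    ∀ N : ℕ, (1-b)^3 * (∑ n ∈ Finset.range N, uTerm q b n)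
      - (1+b)*(1-b^2*q) * (∑ n ∈ Finset.range N, uTerm q (b*q) n) = Edef q b N := by
  have hbq0 : b * q ≠ 0 := mul_ne_zero hb0 hq0
  have hbq1 : ‖b * q‖ < 1 := by
    rw [norm_mul]
    calc ‖b‖ * ‖q‖ ≤ 1 * ‖q‖ := mul_le_mul_of_nonneg_right hb1.le (norm_nonneg q)
      _ = ‖q‖ := one_mul _
      _ < 1 := hq1
  have h1b : (1:ℂ) - b ≠ 0 := by
    have := one_sub_mul_pow_ne hb1 hq1.le 0
    simpa using this
  have hQ : ∀ m, qPoch b q m ≠ 0 := qPoch_ne_zero hb1 hq1.le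
  have hne : ∀ k : ℕ, 1 - b * q ^ k ≠ 0 := one_sub_mul_pow_ne hb1 hq1.le
  intro N
  induction N with
  | zero => simp [Edef]
  | succ N ih =>
    rw [Finset.sum_range_succ, Finset.sum_range_succ]
    have step : (1-b)^3 * uTerm q b N - (1+b)*(1-b^2*q) * uTerm q (b*q) N
        = Edef q b (N+1) - Edef q b N := by
      cases N with
      | zero =>
        have e1 : uTerm q b 0 = 1 / (1 - b) := by
          rw [uTerm_eq hb0]
          simp [qPoch]
        have e2 : uTerm q (b*q) 0 = 1 / (1 - b*q) := by
          rw [uTerm_eq hbq0]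
          simp [qPoch]
        have e3 : qPoch b q 2 = (1 - b) * (1 - b*q) := by
          unfold qPoch
          rw [Finset.prod_range_succ, Finset.prod_range_succ]
          simp
        rw [e1, e2]
        simp only [Edef, e3]
        have hbq : (1:ℂ) - b*q ≠ 0 := by
          have := hne 1
          simpa using this
        field_simp
        ring
      | succ M =>
        -- atoms
        set w : ℂ := ∏ k ∈ Finset.range M, (b - q^(k+1)) with hw
        set x : ℂ := q^(M+1) with hx
        set Q : ℂ := qPoch b q (M+2) with hQdef
        have hQne : Q ≠ 0 := hQ (M+2)
        have hxq : q^(M+2) = q * x := by rw [hx, pow_succ]; ring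
        have hQ3 : qPoch b q (M+3) = Q * (1 - b*(q*x)) := by
          rw [hQdef]
          show qPoch b q (M+2+1) = _
          unfold qPoch
          rw [Finset.prod_range_succ]
          congr 1
          rw [hxq]
        have hbqx : (1:ℂ) - b*(q*x) ≠ 0 := by
          have h := hne (M+2)
          rw [hxq] at h
          exact h
        have hprod1 : ∏ k ∈ Finset.range (M+1), (b - q^(k+1)) = w * (b - x) := by
          rw [Finset.prod_range_succ, ← hw, ← hx]
        -- uTerm q b (M+1)
        have hu : uTerm q b (M+1) = (2*(M:ℂ)+3) * (w * (b - x)) / Q := by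
          rw [uTerm_eq hb0, hprod1, ← hQdef]
          push_cast
          ring
        -- uTerm q (b*q) (M+1)
        have hd2 : qPoch (b*q) q (M+2) ≠ 0 := qPoch_ne_zero hbq1 hq1.le (M+2)
        have hden : (1-b) * qPoch (b*q) q (M+2) = Q * (1 - b*(q*x)) := by
          rw [← hQ3]
          exact (qPoch_succ_shift b q (M+2)).symm
        have hnum : ∏ k ∈ Finset.range (M+1), (b*q - q^(k+1))
            = x * (w * (b - 1)) := by
          calc ∏ k ∈ Finset.range (M+1), (b*q - q^(k+1))
              = ∏ k ∈ Finset.range (M+1), (q * (b - q^k)) := by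
                refine Finset.prod_congr rfl fun k _ => ?_
                rw [pow_succ]; ring
            _ = (∏ _k ∈ Finset.range (M+1), q) * ∏ k ∈ Finset.range (M+1), (b - q^k) := by
                rw [Finset.prod_mul_distrib]
            _ = q^(M+1) * ∏ k ∈ Finset.range (M+1), (b - q^k) := by
                rw [Finset.prod_const, Finset.card_range]
            _ = q^(M+1) * ((∏ k ∈ Finset.range M, (b - q^(k+1))) * (b - q^0)) := by
                rw [Finset.prod_range_succ']
            _ = x * (w * (b - 1)) := by
                rw [← hx, ← hw, pow_zero]
        have hv : uTerm q (b*q) (M+1)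
            = (2*(M:ℂ)+3) * (x * (w * (b - 1))) * (1-b) / (Q * (1 - b*(q*x))) := by
          rw [uTerm_eq hbq0, hnum]
          rw [div_eq_div_iff hd2 (mul_ne_zero hQne hbqx)]
          push_cast
          linear_combination (-(2*(M:ℂ)+3)) * (x * (w * (b - 1))) * hden
        rw [hu, hv]
        show _ = Edef q b (M+1+1) - Edef q b (M+1)
        simp only [Edef]
        rw [hprod1, ← hw]
        push_cast
        rw [← hx, ← hQdef, hQ3, hxq]
        have hbqx' : (1:ℂ) - b*x*q ≠ 0 := by rw [mul_assoc, mul_comm x q]; exact hbqx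
        field_simp
        ring
    linear_combination ih + step

lemma summable_bound3 {r : ℝ} (hr1 : r < 1) (hr0 : 0 ≤ r) (C : ℝ) :
    Summable (fun n : ℕ => (2 * (n:ℝ) + 3) * C * r ^ n) := by
  have h1 := summable_bound hr1 hr0 C
  have h2 : Summable (fun n : ℕ => 2 * C * r ^ n) :=
    ((summable_geometric_of_lt_one hr0 hr1).mul_left (2 * C)).congr fun n => by ring
  refine (h1.add h2).congr fun n => ?_
  ring

lemma FE {q b : ℂ} (hq0 : q ≠ 0) (hq1 : ‖q‖ < 1) (hb0 : b ≠ 0) (hb1 : ‖b‖ < 1) :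
    (1-b)^3 * ∑' n, uTerm q b n = (1+b)*(1-b^2*q) * ∑' n, uTerm q (b*q) n := by
  have hbq0 : b * q ≠ 0 := mul_ne_zero hb0 hq0
  have hbq1 : ‖b * q‖ < 1 := by
    rw [norm_mul]
    calc ‖b‖ * ‖q‖ ≤ 1 * ‖q‖ := mul_le_mul_of_nonneg_right hb1.le (norm_nonneg q)
      _ = ‖q‖ := one_mul _
      _ < 1 := hq1
  have h1 : Summable (uTerm q b) := summable_uTerm hq1 hb0 hb1
  have h2 : Summable (uTerm q (b*q)) := summable_uTerm hq1 hbq0 hbq1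
  set r : ℝ := ‖b‖ with hr
  have hr0 : 0 < r := norm_pos_iff.2 hb0
  obtain ⟨c, hc, hlow⟩ := qPoch_lower_bound hq1 hr0.le hb1
  obtain ⟨M, hM, hup⟩ := num_upper_bound hq1 hr0
  -- the partial sums identity
  have hkey := key_partial hq0 hq1 hb0 hb1
  -- Edef tends to 0
  have hEbound : ∀ N : ℕ, ‖Edef q b (N+1)‖ ≤ (2*(N:ℝ)+3) * (8*M/c) * r^N := by
    intro N
    have e1 : ‖Edef q b (N+1)‖ = ‖b‖ * ‖1-b‖ * ‖∏ k ∈ Finset.range N, (b - q^(k+1))‖ *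
        ‖(2*(N:ℂ)+3) + (2*(N:ℂ)+1)*q^(N+1) - ((2*(N:ℂ)+1) + (2*(N:ℂ)+3)*q^(N+1))*b‖ /
        ‖qPoch b q (N+2)‖ := by
      simp only [Edef]
      rw [norm_div, norm_mul, norm_mul, norm_mul, norm_neg]
    rw [e1]
    have hb1' : ‖b‖ ≤ 1 := hb1.le
    have h1b : ‖(1:ℂ)-b‖ ≤ 2 := by
      have hh := norm_sub_le (1:ℂ) b
      rw [norm_one] at hh
      linarith
    have hW := hup b le_rfl N
    have hq1' : ∀ m : ℕ, ‖q ^ m‖ ≤ 1 := fun m => by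
      rw [norm_pow]; exact pow_le_one₀ (norm_nonneg q) hq1.le
    have hBr : ‖(2*(N:ℂ)+3) + (2*(N:ℂ)+1)*q^(N+1) - ((2*(N:ℂ)+1) + (2*(N:ℂ)+3)*q^(N+1))*b‖
        ≤ 8*(N:ℝ) + 8 := by
      have c1 : ‖(2*(N:ℂ)+3)‖ = 2*(N:ℝ)+3 := by
        have : (2*(N:ℂ)+3) = ((2*(N:ℝ)+3 : ℝ) : ℂ) := by push_cast; ring
        rw [this, Complex.norm_real, Real.norm_eq_abs, abs_of_nonneg (by positivity)]
      have c2 : ‖(2*(N:ℂ)+1)‖ = 2*(N:ℝ)+1 := by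
        have : (2*(N:ℂ)+1) = ((2*(N:ℝ)+1 : ℝ) : ℂ) := by push_cast; ring
        rw [this, Complex.norm_real, Real.norm_eq_abs, abs_of_nonneg (by positivity)]
      calc ‖(2*(N:ℂ)+3) + (2*(N:ℂ)+1)*q^(N+1) - ((2*(N:ℂ)+1) + (2*(N:ℂ)+3)*q^(N+1))*b‖
          ≤ ‖(2*(N:ℂ)+3) + (2*(N:ℂ)+1)*q^(N+1)‖ + ‖((2*(N:ℂ)+1) + (2*(N:ℂ)+3)*q^(N+1))*b‖ :=
            norm_sub_le _ _
        _ ≤ (‖(2*(N:ℂ)+3)‖ + ‖(2*(N:ℂ)+1)*q^(N+1)‖) +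
            (‖(2*(N:ℂ)+1)‖ + ‖(2*(N:ℂ)+3)*q^(N+1)‖) * ‖b‖ := by
            refine add_le_add (norm_add_le _ _) ?_
            rw [norm_mul]
            exact mul_le_mul_of_nonneg_right (norm_add_le _ _) (norm_nonneg b)
        _ ≤ ((2*(N:ℝ)+3) + (2*(N:ℝ)+1)) + ((2*(N:ℝ)+1) + (2*(N:ℝ)+3)) * 1 := by
            have d1 : ‖(2*(N:ℂ)+1)*q^(N+1)‖ ≤ 2*(N:ℝ)+1 := by
              rw [norm_mul, c2]
              nlinarith [hq1' (N+1), norm_nonneg (q^(N+1))]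
            have d2 : ‖(2*(N:ℂ)+3)*q^(N+1)‖ ≤ 2*(N:ℝ)+3 := by
              rw [norm_mul, c1]
              nlinarith [hq1' (N+1), norm_nonneg (q^(N+1))]
            have d3 : (0:ℝ) ≤ (2*(N:ℝ)+1) + (2*(N:ℝ)+3) := by positivity
            rw [c1, c2]
            refine add_le_add (add_le_add le_rfl d1) ?_
            refine mul_le_mul (add_le_add le_rfl d2) hb1' (norm_nonneg b) d3
        _ = 8*(N:ℝ) + 8 := by ring
    have hQlow := hlow b le_rfl (N+2)
    have hQpos : (0:ℝ) < ‖qPoch b q (N+2)‖ := lt_of_lt_of_le hc hQlow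
    rw [div_le_iff₀ hQpos]
    have hfin : (2*(N:ℝ)+3)*(8*M/c)*r^N*c ≤ (2*(N:ℝ)+3)*(8*M/c)*r^N*‖qPoch b q (N+2)‖ := by
      have hnn : (0:ℝ) ≤ (2*(N:ℝ)+3)*(8*M/c)*r^N := by positivity
      exact mul_le_mul_of_nonneg_left hQlow hnn
    have goal2 : ‖b‖ * ‖1-b‖ * ‖∏ k ∈ Finset.range N, (b - q^(k+1))‖ *
        ‖(2*(N:ℂ)+3) + (2*(N:ℂ)+1)*q^(N+1) - ((2*(N:ℂ)+1) + (2*(N:ℂ)+3)*q^(N+1))*b‖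
        ≤ 1 * 2 * (M * r^N) * (8*(N:ℝ)+8) := by
      have hWnn : (0:ℝ) ≤ ‖∏ k ∈ Finset.range N, (b - q^(k+1))‖ := norm_nonneg _
      have hMr : (0:ℝ) ≤ M * r^N := le_trans hWnn hW
      refine mul_le_mul ?_ hBr (norm_nonneg _) (by positivity)
      refine mul_le_mul ?_ hW hWnn (by norm_num)
      exact mul_le_mul hb1' h1b (norm_nonneg _) zero_le_one
    refine goal2.trans ?_
    have : (1:ℝ) * 2 * (M * r ^ N) * (8 * ↑N + 8) ≤ (2 * ↑N + 3) * (8 * M / c) * r ^ N * c := by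
      have hMpos : (0:ℝ) ≤ M := by positivity
      have e2 : (2 * (N:ℝ) + 3) * (8 * M / c) * r ^ N * c = (16 * ↑N + 24) * M * r ^ N := by
        field_simp
        ring
      rw [e2]
      have : (0:ℝ) ≤ M * r^N := by positivity
      nlinarith
    exact this.trans hfin
  have hE0 : Tendsto (Edef q b) atTop (𝓝 0) := by
    rw [← tendsto_add_atTop_iff_nat 1]
    refine squeeze_zero_norm hEbound ?_
    exact (summable_bound3 hb1 hr0.le (8*M/c)).tendsto_atTop_zero
  -- limit of partial sums
  have hT1 : Tendsto (fun N => (1-b)^3 * (∑ n ∈ Finset.range N, uTerm q b n)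
      - (1+b)*(1-b^2*q) * (∑ n ∈ Finset.range N, uTerm q (b*q) n)) atTop
      (𝓝 ((1-b)^3 * ∑' n, uTerm q b n - (1+b)*(1-b^2*q) * ∑' n, uTerm q (b*q) n)) := by
    exact (h1.hasSum.tendsto_sum_nat.const_mul _).sub (h2.hasSum.tendsto_sum_nat.const_mul _)
  have hT2 : Tendsto (fun N => (1-b)^3 * (∑ n ∈ Finset.range N, uTerm q b n)
      - (1+b)*(1-b^2*q) * (∑ n ∈ Finset.range N, uTerm q (b*q) n)) atTop (𝓝 0) := by
    refine hE0.congr fun N => ?_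
    exact (hkey N).symm
  have := tendsto_nhds_unique hT1 hT2
  exact sub_eq_zero.1 this

lemma star_iter {q b : ℂ} (hq0 : q ≠ 0) (hq1 : ‖q‖ < 1) (hb0 : b ≠ 0) (hb1 : ‖b‖ < 1) :
    ∀ k : ℕ, qPoch b q k ^ 4 * ∑' n, uTerm q b n
      = qPoch (b^2) q (2*k) * ∑' n, uTerm q (b*q^k) n := by
  intro k
  induction k with
  | zero => simp [qPoch]
  | succ k ih =>
    have hbk0 : b * q^k ≠ 0 := mul_ne_zero hb0 (pow_ne_zero _ hq0)
    have hbk1 : ‖b * q^k‖ < 1 := by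
      rw [norm_mul, norm_pow]
      calc ‖b‖ * ‖q‖^k ≤ ‖b‖ * 1 := by
            refine mul_le_mul_of_nonneg_left ?_ (norm_nonneg b)
            exact pow_le_one₀ (norm_nonneg q) hq1.le
        _ = ‖b‖ := mul_one _
        _ < 1 := hb1
    have hfe := FE hq0 hq1 hbk0 hbk1
    -- multiply FE by (1 - b*q^k)
    have hfe4 : (1 - b*q^k)^4 * ∑' n, uTerm q (b*q^k) n
        = (1 - (b*q^k)^2) * (1 - (b*q^k)^2*q) * ∑' n, uTerm q ((b*q^k)*q) n := by
      have := congrArg (fun z => (1 - b*q^k) * z) hfe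
      calc (1 - b*q^k)^4 * ∑' n, uTerm q (b*q^k) n
          = (1 - b*q^k) * ((1-(b*q^k))^3 * ∑' n, uTerm q (b*q^k) n) := by ring
        _ = (1 - b*q^k) * ((1+(b*q^k))*(1-(b*q^k)^2*q) * ∑' n, uTerm q ((b*q^k)*q) n) := by
            rw [hfe]
        _ = (1 - (b*q^k)^2) * (1 - (b*q^k)^2*q) * ∑' n, uTerm q ((b*q^k)*q) n := by ring
    have e1 : qPoch b q (k+1) = qPoch b q k * (1 - b*q^k) := by
      unfold qPoch; rw [Finset.prod_range_succ]
    have e2 : qPoch (b^2) q (2*(k+1)) = qPoch (b^2) q (2*k)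
        * (1 - b^2*q^(2*k)) * (1 - b^2*q^(2*k+1)) := by
      have h2 : 2*(k+1) = (2*k+1)+1 := by ring
      rw [h2]
      unfold qPoch
      rw [Finset.prod_range_succ, Finset.prod_range_succ]
    have e3 : (b*q^k)^2 = b^2 * q^(2*k) := by
      rw [mul_pow, ← pow_mul, mul_comm k 2]
    have e4 : (b*q^k)*q = b*q^(k+1) := by rw [pow_succ]; ring
    calc qPoch b q (k+1) ^ 4 * ∑' n, uTerm q b n
        = (1 - b*q^k)^4 * (qPoch b q k ^ 4 * ∑' n, uTerm q b n) := by rw [e1]; ring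
      _ = (1 - b*q^k)^4 * (qPoch (b^2) q (2*k) * ∑' n, uTerm q (b*q^k) n) := by rw [ih]
      _ = qPoch (b^2) q (2*k) * ((1 - b*q^k)^4 * ∑' n, uTerm q (b*q^k) n) := by ring
      _ = qPoch (b^2) q (2*k) * ((1 - (b*q^k)^2) * (1 - (b*q^k)^2*q)
            * ∑' n, uTerm q ((b*q^k)*q) n) := by rw [hfe4]
      _ = qPoch (b^2) q (2*(k+1)) * ∑' n, uTerm q (b*q^(k+1)) n := by
          rw [e2, e3, e4]
          ring_nf

lemma tendsto_qPoch {q : ℂ} (hq1 : ‖q‖ < 1) (b : ℂ) :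
    Tendsto (fun n => qPoch b q n) atTop (𝓝 (qPochInf b q)) := by
  have hsum : Summable (fun k : ℕ => ‖-(b * q ^ k)‖) := by
    have h := (summable_geometric_of_lt_one (norm_nonneg q) hq1).mul_left ‖b‖
    refine h.congr fun k => ?_
    rw [norm_neg, norm_mul, norm_pow]
  obtain ⟨P, hP, hPt⟩ := hasProd_one_add hsum
  have hfun : (fun k : ℕ => 1 + -(b * q ^ k)) = (fun k : ℕ => 1 - b * q ^ k) := by
    funext k; ring
  rw [hfun] at hP hPt
  have : qPochInf b q = P := hP.tprod_eq
  rw [this]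
  exact hPt.congr fun n => by rw [qPoch]

lemma qPochInf_ne_zero {q b : ℂ} (hq1 : ‖q‖ < 1) (hb1 : ‖b‖ < 1) :
    qPochInf b q ≠ 0 := by
  obtain ⟨c, hc, hlow⟩ := qPoch_lower_bound hq1 (norm_nonneg b) hb1
  have h1 : Tendsto (fun n => ‖qPoch b q n‖) atTop (𝓝 ‖qPochInf b q‖) :=
    (tendsto_qPoch hq1 b).norm
  have h2 : c ≤ ‖qPochInf b q‖ := ge_of_tendsto' h1 (fun n => hlow b le_rfl n)
  intro h
  rw [h] at h2
  simp at h2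
  linarith

lemma main_eq {q b : ℂ} (hq0 : q ≠ 0) (hq1 : ‖q‖ < 1) (hb0 : b ≠ 0) (hb1 : ‖b‖ < 1) :
    qPochInf b q ^ 4 * ∑' n, uTerm q b n
      = qPochInf (b^2) q * ∑' n : ℕ, (2 * (n : ℂ) + 1) * ∏ k ∈ Finset.range n, (0 - q ^ (k + 1)) := by
  have h2k : Tendsto (fun k : ℕ => 2*k) atTop atTop :=
    tendsto_atTop_mono (fun k => by simp; omega) tendsto_id
  have hL : Tendsto (fun k => qPoch b q k ^ 4 * ∑' n, uTerm q b n) atTop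
      (𝓝 (qPochInf b q ^ 4 * ∑' n, uTerm q b n)) :=
    (((tendsto_qPoch hq1 b).pow 4).mul_const _)
  have hR1 : Tendsto (fun k => qPoch (b^2) q (2*k)) atTop (𝓝 (qPochInf (b^2) q)) :=
    (tendsto_qPoch hq1 (b^2)).comp h2k
  have hR2 : Tendsto (fun k => ∑' n, uTerm q (b*q^k) n) atTop
      (𝓝 (∑' n : ℕ, (2 * (n : ℂ) + 1) * ∏ k ∈ Finset.range n, (0 - q ^ (k + 1)))) := by
    refine tendsto_S_zero hq1 (norm_pos_iff.2 hb0) hb1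
      (fun j => mul_ne_zero hb0 (pow_ne_zero _ hq0)) (fun j => ?_) ?_
    · rw [norm_mul, norm_pow]
      calc ‖b‖ * ‖q‖^j ≤ ‖b‖ * 1 := by
            refine mul_le_mul_of_nonneg_left ?_ (norm_nonneg b)
            exact pow_le_one₀ (norm_nonneg q) hq1.le
        _ = ‖b‖ := mul_one _
    · have := (tendsto_pow_atTop_nhds_zero_of_norm_lt_one hq1).const_mul b
      simpa using this
  have hR : Tendsto (fun k => qPoch (b^2) q (2*k) * ∑' n, uTerm q (b*q^k) n) atTop
      (𝓝 (qPochInf (b^2) q * ∑' n : ℕ, (2 * (n : ℂ) + 1)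
        * ∏ k ∈ Finset.range n, (0 - q ^ (k + 1)))) := hR1.mul hR2
  refine tendsto_nhds_unique hL (hR.congr fun k => ?_)
  exact (star_iter hq0 hq1 hb0 hb1 k).symm

lemma S_at_q {q : ℂ} (hq0 : q ≠ 0) (hq1 : ‖q‖ < 1) :
    ∑' n, uTerm q q n = 1/(1-q) := by
  rw [tsum_eq_single 0]
  · unfold uTerm qPoch
    simp
  · intro n hn
    unfold uTerm
    have h1 : qPoch (q/q) q n = 0 := by
      unfold qPoch
      refine Finset.prod_eq_zero (i := 0) ?_ ?_
      · exact Finset.mem_range.2 (Nat.pos_of_ne_zero hn)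
      · rw [div_self hq0]
        simp
    rw [h1]
    simp

lemma shift_inf {q : ℂ} (hq1 : ‖q‖ < 1) (b : ℂ) :
    qPochInf b q = (1-b) * qPochInf (b*q) q := by
  have h1 : Tendsto (fun n => qPoch b q (n+1)) atTop (𝓝 (qPochInf b q)) :=
    (tendsto_qPoch hq1 b).comp (tendsto_add_atTop_nat 1)
  have h2 : Tendsto (fun n => (1-b) * qPoch (b*q) q n) atTop
      (𝓝 ((1-b) * qPochInf (b*q) q)) := (tendsto_qPoch hq1 (b*q)).const_mul _
  exact tendsto_nhds_unique h1 (h2.congr fun n => (qPoch_succ_shift b q n).symm)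

theorem stmt10 (q a : ℂ) (hq0 : 0 < ‖q‖) (hq1 : ‖q‖ < 1)
    (ha0 : a ≠ 0) (ha : ‖a‖ < 1) :
    ∑' n : ℕ, (2 * (n : ℂ) + 1) * qPoch (q / a) q n * a ^ n / qPoch a q (n + 1) =
      qPochInf q q ^ 3 * qPochInf (a ^ 2) q / qPochInf a q ^ 4 := by
  have hq1' : ‖q‖ < 1 := hq1
  have ha1' : ‖a‖ < 1 := ha
  have hq0' : q ≠ 0 := by
    intro h
    rw [h] at hq0
    simp at hq0
  have h1q : (1:ℂ) - q ≠ 0 := by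
    have := one_sub_mul_pow_ne hq1' hq1'.le 0
    simpa using this
  have hPq : qPochInf q q ≠ 0 := qPochInf_ne_zero hq1' hq1'
  have hPa : qPochInf a q ≠ 0 := qPochInf_ne_zero hq1' ha1'
  -- identify the Jacobi constant
  have hJ : ∑' n : ℕ, (2 * (n : ℂ) + 1) * ∏ k ∈ Finset.range n, (0 - q ^ (k + 1))
      = qPochInf q q ^ 3 := by
    have h4 := main_eq hq0' hq1' hq0' hq1'
    rw [S_at_q hq0' hq1'] at h4
    have h5 : qPochInf (q^2) q * (1-q) = qPochInf q q := by
      have := shift_inf hq1' q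
      rw [← pow_two] at this
      rw [this]
      ring
    have h6 : qPochInf (q^2) q ≠ 0 := by
      intro h
      rw [h] at h5
      simp at h5
      exact hPq h5.symm
    -- h4 : Π(q)^4 * (1/(1-q)) = Π(q²) * J
    have h7 : qPochInf q q ^ 4 = qPochInf q q *
        (∑' n : ℕ, (2 * (n : ℂ) + 1) * ∏ k ∈ Finset.range n, (0 - q ^ (k + 1))) := by
      calc qPochInf q q ^ 4 = (qPochInf q q ^ 4 * (1/(1-q))) * (1-q) := by
            field_simp
        _ = (qPochInf (q^2) q * ∑' n : ℕ, (2 * (n : ℂ) + 1)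
              * ∏ k ∈ Finset.range n, (0 - q ^ (k + 1))) * (1-q) := by rw [h4]
        _ = (qPochInf (q^2) q * (1-q)) * ∑' n : ℕ, (2 * (n : ℂ) + 1)
              * ∏ k ∈ Finset.range n, (0 - q ^ (k + 1)) := by ring
        _ = qPochInf q q * ∑' n : ℕ, (2 * (n : ℂ) + 1)
              * ∏ k ∈ Finset.range n, (0 - q ^ (k + 1)) := by rw [h5]
    have h8 : qPochInf q q ^ 4 = qPochInf q q * qPochInf q q ^ 3 := by ring
    exact mul_left_cancel₀ hPq (h8.symm.trans h7) |>.symm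
  have hm := main_eq hq0' hq1' ha0 ha1'
  rw [hJ] at hm
  have hsum : ∑' n : ℕ, (2 * (n : ℂ) + 1) * qPoch (q / a) q n * a ^ n / qPoch a q (n + 1)
      = ∑' n, uTerm q a n := rfl
  rw [hsum]
  rw [eq_div_iff (pow_ne_zero 4 hPa)]
  linear_combination hm
end

section
/- Let q be a complex number with 0 < |q| < 1. Then ∑_{n=2}^{∞} ((1−q^{2n−1})/((1−q^{n−1})(1−q^n)))·(−1)^n·q^{3n(n−1)/2} = (q;q)_∞ − (1−2q)/(1−q). -/
namespace Stmt15Aux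

open Finset Filter Topology

/-- Triangular numbers. -/
def tri : ℕ → ℕ
  | 0 => 0
  | n + 1 => tri n + n + 1

lemma two_tri (n : ℕ) : 2 * tri n = n * (n + 1) := by
  induction n with
  | zero => rfl
  | succ n ih =>
      have h : (n + 1) * (n + 2) = n * (n + 1) + 2 * (n + 1) := by ring
      show 2 * (tri n + n + 1) = (n + 1) * (n + 2)
      omega

lemma le_tri (n : ℕ) : n ≤ tri n := by
  induction n with
  | zero => simp [tri]
  | succ n ih => show n + 1 ≤ tri n + n + 1; omega

/-- The partial product `∏_{k=i+1}^{n} (1 - q^k)`. -/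
noncomputable def QI (q : ℂ) (i n : ℕ) : ℂ := ∏ k ∈ Finset.Ico (i + 1) (n + 1), (1 - q ^ k)

/-- Shanks' sum. -/
noncomputable def Ls (q : ℂ) (n : ℕ) : ℂ :=
  ∑ i ∈ Finset.range (n + 1), (-1 : ℂ) ^ i * q ^ (tri i + i * n) * QI q i n

/-- The `j`-th pair of pentagonal terms. -/
noncomputable def pp (q : ℂ) (j : ℕ) : ℂ :=
  (-1 : ℂ) ^ (j + 1) * (q ^ (tri (j + 1) + (j + 1) * j) + q ^ (tri (j + 1) + (j + 1) * (j + 1)))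

/-- Telescoping auxiliary sequence. -/
noncomputable def hh (q : ℂ) (k : ℕ) : ℂ :=
  (-1 : ℂ) ^ k * q ^ (3 * tri (k + 1)) / (1 - q ^ (k + 1))

lemma QI_self (q : ℂ) (m : ℕ) : QI q m m = 1 := by
  simp [QI]

lemma shanks_step (q : ℂ) (n : ℕ) : Ls q (n + 1) = Ls q n + pp q n := by
  classical
  set c : ℕ → ℂ := fun i => (-1 : ℂ) ^ i * q ^ (tri i + i * n) * QI q i n with hc
  have hsplit : ∀ i ∈ Finset.range (n + 1),
      (-1 : ℂ) ^ i * q ^ (tri i + i * (n + 1)) * QI q i (n + 1)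
        = c i + (c i * q ^ i - c i) - c i * q ^ (i + (n + 1)) := by
    intro i hi
    have hi' : i + 1 ≤ n + 1 := by
      have := Finset.mem_range.mp hi; omega
    have hQ : QI q i (n + 1) = QI q i n * (1 - q ^ (n + 1)) := by
      unfold QI
      exact Finset.prod_Ico_succ_top hi' _
    have hE : tri i + i * (n + 1) = (tri i + i * n) + i := by
      have : i * (n + 1) = i * n + i := by ring
      omega
    rw [hQ, hE, pow_add, pow_add, hc]
    ring
  have key : Ls q (n + 1)
      = (∑ i ∈ Finset.range (n + 1), c i)
        + ((∑ i ∈ Finset.range (n + 1), (c i * q ^ i - c i))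
            - ∑ i ∈ Finset.range (n + 1), c i * q ^ (i + (n + 1)))
        + (-1 : ℂ) ^ (n + 1) * q ^ (tri (n + 1) + (n + 1) * (n + 1)) := by
    unfold Ls
    rw [Finset.sum_range_succ, Finset.sum_congr rfl hsplit]
    rw [Finset.sum_sub_distrib, Finset.sum_add_distrib, QI_self, mul_one]
    ring
  have he : (∑ i ∈ Finset.range (n + 1), (c i * q ^ i - c i))
      = ∑ i ∈ Finset.range n, c i * q ^ (i + (n + 1)) := by
    rw [Finset.sum_range_succ']
    have h0 : c 0 * q ^ 0 - c 0 = 0 := by simp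
    rw [h0, add_zero]
    refine Finset.sum_congr rfl fun i hi => ?_
    have hi' : i < n := Finset.mem_range.mp hi
    have hQ : QI q i n = (1 - q ^ (i + 1)) * QI q (i + 1) n := by
      unfold QI
      exact Finset.prod_eq_prod_Ico_succ_bot (by omega) _
    have hE : tri (i + 1) + (i + 1) * n = (tri i + i * n) + (i + (n + 1)) := by
      have h1 : (i + 1) * n = i * n + n := by ring
      have h2 : tri (i + 1) = tri i + i + 1 := rfl
      omega
    calc c (i + 1) * q ^ (i + 1) - c (i + 1) = c (i + 1) * (q ^ (i + 1) - 1) := by ring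
      _ = (-1 : ℂ) ^ i * q ^ (tri (i + 1) + (i + 1) * n)
            * ((1 - q ^ (i + 1)) * QI q (i + 1) n) := by
          rw [hc]; simp only []; rw [pow_succ]; ring
      _ = (-1 : ℂ) ^ i * q ^ (tri (i + 1) + (i + 1) * n) * QI q i n := by rw [← hQ]
      _ = c i * q ^ (i + (n + 1)) := by
          rw [hc]; simp only []; rw [hE, pow_add]; ring
  have hd : (∑ i ∈ Finset.range (n + 1), c i * q ^ (i + (n + 1)))
      = (∑ i ∈ Finset.range n, c i * q ^ (i + (n + 1))) + c n * q ^ (n + (n + 1)) :=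
    Finset.sum_range_succ _ _
  have hdn : c n * q ^ (n + (n + 1)) = (-1 : ℂ) ^ n * q ^ (tri (n + 1) + (n + 1) * n) := by
    rw [hc]; simp only [QI_self, mul_one]
    rw [mul_assoc, ← pow_add]
    have hE : tri n + n * n + (n + (n + 1)) = tri (n + 1) + (n + 1) * n := by
      have h1 : (n + 1) * n = n * n + n := by ring
      have h2 : tri (n + 1) = tri n + n + 1 := rfl
      omega
    rw [hE]
  have hLn : Ls q n = ∑ i ∈ Finset.range (n + 1), c i := rfl
  rw [key, he, hd, hdn, ← hLn]
  unfold pp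
  rw [pow_succ]
  ring

lemma shanks (q : ℂ) (n : ℕ) : Ls q n = 1 + ∑ j ∈ Finset.range n, pp q j := by
  induction n with
  | zero =>
      unfold Ls
      simp [QI, tri]
  | succ n ih =>
      rw [shanks_step, ih, Finset.sum_range_succ]
      ring

section Analytic

variable {q : ℂ} (hq : ‖q‖ < 1)

include hq

lemma one_sub_pow_ne (k : ℕ) : (1 : ℂ) - q ^ (k + 1) ≠ 0 := by
  intro h
  have h1 : q ^ (k + 1) = 1 := by linear_combination -h
  have h2 : ‖q ^ (k + 1)‖ < 1 := by
    rw [norm_pow]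
    exact pow_lt_one₀ (norm_nonneg q) hq (Nat.succ_ne_zero k)
  rw [h1] at h2
  simp at h2

lemma norm_one_sub_pow_ge (k : ℕ) : 1 - ‖q‖ ≤ ‖(1 : ℂ) - q ^ (k + 1)‖ := by
  have h1 : ‖q ^ (k + 1)‖ ≤ ‖q‖ := by
    rw [norm_pow]
    calc ‖q‖ ^ (k + 1) ≤ ‖q‖ ^ 1 :=
          pow_le_pow_of_le_one (norm_nonneg q) hq.le (by omega)
      _ = ‖q‖ := pow_one _
  calc 1 - ‖q‖ ≤ 1 - ‖q ^ (k + 1)‖ := by linarith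
    _ = ‖(1 : ℂ)‖ - ‖q ^ (k + 1)‖ := by simp
    _ ≤ ‖(1 : ℂ) - q ^ (k + 1)‖ := norm_sub_norm_le _ _

lemma QI_norm_le (i n : ℕ) : ‖QI q i n‖ ≤ Real.exp ((1 - ‖q‖)⁻¹) := by
  have hgeom : Summable fun k : ℕ => ‖q‖ ^ k :=
    summable_geometric_of_lt_one (norm_nonneg q) hq
  calc ‖QI q i n‖ = ∏ k ∈ Finset.Ico (i + 1) (n + 1), ‖(1 : ℂ) - q ^ k‖ := by
        rw [QI, norm_prod]
    _ ≤ ∏ k ∈ Finset.Ico (i + 1) (n + 1), Real.exp (‖q‖ ^ k) := by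
        refine Finset.prod_le_prod (fun k _ => norm_nonneg _) (fun k _ => ?_)
        calc ‖(1 : ℂ) - q ^ k‖ ≤ ‖(1 : ℂ)‖ + ‖q ^ k‖ := norm_sub_le _ _
          _ = ‖q‖ ^ k + 1 := by rw [norm_one, norm_pow]; ring
          _ ≤ Real.exp (‖q‖ ^ k) := Real.add_one_le_exp _
    _ = Real.exp (∑ k ∈ Finset.Ico (i + 1) (n + 1), ‖q‖ ^ k) := (Real.exp_sum _ _).symm
    _ ≤ Real.exp ((1 - ‖q‖)⁻¹) := by
        apply Real.exp_le_exp.mpr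
        calc (∑ k ∈ Finset.Ico (i + 1) (n + 1), ‖q‖ ^ k) ≤ ∑' k : ℕ, ‖q‖ ^ k :=
              Summable.sum_le_tsum _ (fun k _ => pow_nonneg (norm_nonneg q) k) hgeom
          _ = (1 - ‖q‖)⁻¹ := tsum_geometric_of_lt_one (norm_nonneg q) hq

lemma multipliable_poch : Multipliable fun k : ℕ => 1 - q * q ^ k := by
  have hfn : ∀ (_ : Unit) (k : ℕ), (1 : ℂ) - q * q ^ k ≠ 0 := by
    intro _ k
    rw [← pow_succ']
    exact one_sub_pow_ne hq k
  have hf : ∀ _ : Unit, Summable fun k : ℕ => Complex.log (1 - q * q ^ k) := by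
    intro _
    apply Summable.of_norm_bounded_eventually_nat (g := fun k => 3 / 2 * (‖q‖ * ‖q‖ ^ k))
    · exact ((summable_geometric_of_lt_one (norm_nonneg q) hq).mul_left ‖q‖).mul_left _
    · have hev : ∀ᶠ k : ℕ in atTop, ‖q‖ ^ k ≤ 1 / 2 := by
        have := tendsto_pow_atTop_nhds_zero_of_lt_one (norm_nonneg q) hq
        exact this.eventually (eventually_le_nhds (by norm_num))
      filter_upwards [hev] with k hk
      have hz : ‖-(q * q ^ k)‖ ≤ 1 / 2 := by
        rw [norm_neg, norm_mul, norm_pow]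
        calc ‖q‖ * ‖q‖ ^ k ≤ 1 * (1 / 2) := by
              apply mul_le_mul hq.le hk (pow_nonneg (norm_nonneg q) k) (by norm_num)
          _ = 1 / 2 := by norm_num
      have := Complex.norm_log_one_add_half_le_self hz
      rw [show (1 : ℂ) + -(q * q ^ k) = 1 - q * q ^ k from by ring] at this
      calc ‖Complex.log (1 - q * q ^ k)‖ ≤ 3 / 2 * ‖-(q * q ^ k)‖ := this
        _ = 3 / 2 * (‖q‖ * ‖q‖ ^ k) := by rw [norm_neg, norm_mul, norm_pow]
  exact Complex.multipliable_of_summable_log (hf ())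

lemma tendsto_Ls : Tendsto (fun n => Ls q n) atTop (𝓝 (qPochInf q q)) := by
  have hprod : Tendsto (fun n => ∏ k ∈ Finset.range n, (1 - q * q ^ k)) atTop
      (𝓝 (qPochInf q q)) := (multipliable_poch hq).hasProd.tendsto_prod_nat
  -- decompose Ls
  have hdec : ∀ n : ℕ, Ls q n = (∏ k ∈ Finset.range n, (1 - q * q ^ k))
      + ∑ i ∈ Finset.range n, (-1 : ℂ) ^ (i + 1) * q ^ (tri (i + 1) + (i + 1) * n)
          * QI q (i + 1) n := by
    intro n
    unfold Ls
    rw [Finset.sum_range_succ']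
    have h0 : (-1 : ℂ) ^ 0 * q ^ (tri 0 + 0 * n) * QI q 0 n = QI q 0 n := by
      simp [tri]
    rw [h0]
    have hQ : QI q 0 n = ∏ k ∈ Finset.range n, (1 - q * q ^ k) := by
      unfold QI
      rw [Finset.prod_Ico_eq_prod_range]
      simp only [Nat.add_sub_cancel]
      refine Finset.prod_congr rfl (fun k _ => ?_)
      rw [add_comm 1 k, pow_succ']
    rw [hQ]
    ring
  have htail : Tendsto (fun n => ∑ i ∈ Finset.range n,
      (-1 : ℂ) ^ (i + 1) * q ^ (tri (i + 1) + (i + 1) * n) * QI q (i + 1) n) atTop (𝓝 0) := by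
    have hq1 : (0:ℝ) < 1 - ‖q‖ := by linarith
    set B := Real.exp ((1 - ‖q‖)⁻¹) with hB
    have hBpos : 0 < B := Real.exp_pos _
    refine squeeze_zero_norm' (a := fun n => B * (1 - ‖q‖)⁻¹ * ‖q‖ ^ n) ?_ ?_
    · filter_upwards [eventually_ge_atTop 1] with n hn
      calc ‖∑ i ∈ Finset.range n, (-1 : ℂ) ^ (i + 1) * q ^ (tri (i + 1) + (i + 1) * n)
              * QI q (i + 1) n‖
          ≤ ∑ i ∈ Finset.range n, ‖(-1 : ℂ) ^ (i + 1) * q ^ (tri (i + 1) + (i + 1) * n)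
              * QI q (i + 1) n‖ := norm_sum_le _ _
        _ ≤ ∑ i ∈ Finset.range n, B * (‖q‖ ^ n * ‖q‖ ^ i) := by
            refine Finset.sum_le_sum fun i _ => ?_
            have hnorm : ‖(-1 : ℂ) ^ (i + 1) * q ^ (tri (i + 1) + (i + 1) * n)
                * QI q (i + 1) n‖ = ‖q‖ ^ (tri (i + 1) + (i + 1) * n) * ‖QI q (i + 1) n‖ := by
              rw [norm_mul, norm_mul, norm_pow, norm_pow, norm_neg, norm_one, one_pow, one_mul]
            rw [hnorm]
            have hexp : n + i ≤ tri (i + 1) + (i + 1) * n := by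
              have h1 : (i + 1) * n = i * n + n := by ring
              have h2 : i ≤ i * n := Nat.le_mul_of_pos_right i (by omega)
              have h3 := le_tri (i + 1)
              omega
            calc ‖q‖ ^ (tri (i + 1) + (i + 1) * n) * ‖QI q (i + 1) n‖
                ≤ ‖q‖ ^ (n + i) * B := by
                  apply mul_le_mul (pow_le_pow_of_le_one (norm_nonneg q) hq.le hexp)
                    (QI_norm_le hq _ _) (norm_nonneg _)
                    (pow_nonneg (norm_nonneg q) _)
              _ = B * (‖q‖ ^ n * ‖q‖ ^ i) := by rw [pow_add]; ring
        _ = B * ‖q‖ ^ n * (∑ i ∈ Finset.range n, ‖q‖ ^ i) := by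
            rw [Finset.mul_sum]
            refine Finset.sum_congr rfl fun i _ => by ring
        _ ≤ B * ‖q‖ ^ n * (1 - ‖q‖)⁻¹ := by
            apply mul_le_mul_of_nonneg_left
            · calc (∑ i ∈ Finset.range n, ‖q‖ ^ i) ≤ ∑' i : ℕ, ‖q‖ ^ i :=
                    Summable.sum_le_tsum _ (fun i _ => pow_nonneg (norm_nonneg q) i)
                      (summable_geometric_of_lt_one (norm_nonneg q) hq)
                _ = (1 - ‖q‖)⁻¹ := tsum_geometric_of_lt_one (norm_nonneg q) hq
            · positivity
        _ = B * (1 - ‖q‖)⁻¹ * ‖q‖ ^ n := by ring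
    · have := (tendsto_pow_atTop_nhds_zero_of_lt_one (norm_nonneg q) hq).const_mul
        (B * (1 - ‖q‖)⁻¹)
      simpa using this
  have := hprod.add htail
  rw [add_zero] at this
  apply this.congr
  intro n
  exact (hdec n).symm

lemma summable_pp : Summable (pp q) := by
  apply Summable.of_norm_bounded (g := fun j => 2 * (‖q‖ * ‖q‖ ^ j))
  · exact ((summable_geometric_of_lt_one (norm_nonneg q) hq).mul_left ‖q‖).mul_left 2
  · intro j
    have h1 : j + 1 ≤ tri (j + 1) + (j + 1) * j := by
      have := le_tri (j + 1); omega
    have h2 : j + 1 ≤ tri (j + 1) + (j + 1) * (j + 1) := by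
      have := le_tri (j + 1); omega
    calc ‖pp q j‖ = ‖q ^ (tri (j + 1) + (j + 1) * j) + q ^ (tri (j + 1) + (j + 1) * (j + 1))‖ := by
          rw [pp, norm_mul, norm_pow, norm_neg, norm_one, one_pow, one_mul]
      _ ≤ ‖q ^ (tri (j + 1) + (j + 1) * j)‖ + ‖q ^ (tri (j + 1) + (j + 1) * (j + 1))‖ :=
          norm_add_le _ _
      _ ≤ ‖q‖ ^ (j + 1) + ‖q‖ ^ (j + 1) := by
          rw [norm_pow, norm_pow]
          exact add_le_add (pow_le_pow_of_le_one (norm_nonneg q) hq.le h1)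
            (pow_le_pow_of_le_one (norm_nonneg q) hq.le h2)
      _ = 2 * (‖q‖ * ‖q‖ ^ j) := by rw [pow_succ]; ring

lemma pnt : qPochInf q q = 1 + ∑' j : ℕ, pp q j := by
  have h1 : Tendsto (fun n => Ls q n) atTop (𝓝 (1 + ∑' j : ℕ, pp q j)) := by
    have h2 : Tendsto (fun n => ∑ j ∈ Finset.range n, pp q j) atTop
        (𝓝 (∑' j : ℕ, pp q j)) := (summable_pp hq).hasSum.tendsto_sum_nat
    have h3 := (tendsto_const_nhds (x := (1 : ℂ)) (f := atTop)).add h2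
    apply h3.congr
    intro n
    exact (shanks q n).symm
  exact tendsto_nhds_unique (tendsto_Ls hq) h1

lemma norm_hh_le (k : ℕ) : ‖hh q k‖ ≤ ‖q‖ ^ (k + 1) * (1 - ‖q‖)⁻¹ := by
  have hpos : (0:ℝ) < 1 - ‖q‖ := by linarith
  have hden := norm_one_sub_pow_ge hq k
  have hnum : ‖(-1 : ℂ) ^ k * q ^ (3 * tri (k + 1))‖ ≤ ‖q‖ ^ (k + 1) := by
    rw [norm_mul, norm_pow, norm_pow, norm_neg, norm_one, one_pow, one_mul]
    apply pow_le_pow_of_le_one (norm_nonneg q) hq.le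
    have := le_tri (k + 1); omega
  calc ‖hh q k‖ = ‖(-1 : ℂ) ^ k * q ^ (3 * tri (k + 1))‖ / ‖(1 : ℂ) - q ^ (k + 1)‖ := by
        rw [hh, norm_div]
    _ ≤ ‖q‖ ^ (k + 1) / (1 - ‖q‖) :=
        div_le_div₀ (by positivity) hnum hpos hden
    _ = ‖q‖ ^ (k + 1) * (1 - ‖q‖)⁻¹ := div_eq_mul_inv _ _

lemma summable_hh : Summable (hh q) := by
  apply Summable.of_norm_bounded (g := fun k => ‖q‖ ^ (k + 1) * (1 - ‖q‖)⁻¹)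
  · have : Summable (fun k : ℕ => ‖q‖ * ‖q‖ ^ k) :=
      (summable_geometric_of_lt_one (norm_nonneg q) hq).mul_left ‖q‖
    apply (this.mul_right ((1 - ‖q‖)⁻¹)).congr
    intro k
    rw [pow_succ]
    ring
  · exact norm_hh_le hq

lemma tendsto_hh : Tendsto (hh q) atTop (𝓝 0) := by
  apply squeeze_zero_norm (norm_hh_le hq)
  have h1 := (tendsto_pow_atTop_nhds_zero_of_lt_one (norm_nonneg q) hq).const_mul
    (‖q‖ * (1 - ‖q‖)⁻¹)
  have h2 : (fun n : ℕ => ‖q‖ * (1 - ‖q‖)⁻¹ * ‖q‖ ^ n)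
      = fun n : ℕ => ‖q‖ ^ (n + 1) * (1 - ‖q‖)⁻¹ := by
    funext n; rw [pow_succ]; ring
  rw [h2] at h1
  simpa using h1

lemma hasSum_tel : HasSum (fun n => hh q n - hh q (n + 1)) (hh q 0) := by
  have hs : Summable fun n => hh q n - hh q (n + 1) := by
    apply (summable_hh hq).sub
    exact (summable_nat_add_iff 1).mpr (summable_hh hq)
  have h1 := hs.hasSum.tendsto_sum_nat
  have h2 : Tendsto (fun n => ∑ i ∈ Finset.range n, (hh q i - hh q (i + 1))) atTop
      (𝓝 (hh q 0)) := by
    have h3 : (fun n => ∑ i ∈ Finset.range n, (hh q i - hh q (i + 1)))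
        = fun n => hh q 0 - hh q n := by
      funext n; exact Finset.sum_range_sub' (hh q) n
    rw [h3]
    have := (tendsto_const_nhds (x := hh q 0) (f := atTop)).sub (tendsto_hh hq)
    simpa using this
  have heq : (∑' n, (hh q n - hh q (n + 1))) = hh q 0 := tendsto_nhds_unique h1 h2
  exact heq ▸ hs.hasSum

end Analytic

end Stmt15Aux

open Stmt15Aux in
/-- The series on the left runs over `n ≥ 2`; here the summation index is shifted by two,
so that the term of index `n : ℕ` corresponds to `n + 2`. -/
theorem stmt15 (q : ℂ) (hq0 : 0 < ‖q‖) (hq1 : ‖q‖ < 1) :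
    ∑' n : ℕ, ((1 - q ^ (2 * (n + 2) - 1)) / ((1 - q ^ (n + 1)) * (1 - q ^ (n + 2)))) *
        (-1) ^ (n + 2) * q ^ (3 * (n + 2) * (n + 1) / 2) =
      qPochInf q q - (1 - 2 * q) / (1 - q) := by
  have hq : ‖q‖ < 1 := by exact hq1
  have perterm : ∀ n : ℕ,
      ((1 - q ^ (2 * (n + 2) - 1)) / ((1 - q ^ (n + 1)) * (1 - q ^ (n + 2)))) *
        (-1) ^ (n + 2) * q ^ (3 * (n + 2) * (n + 1) / 2)
      = pp q (n + 1) + (hh q n - hh q (n + 1)) := by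
    intro n
    have hu : (1 : ℂ) - q ^ (n + 1) ≠ 0 := one_sub_pow_ne hq n
    have hv : (1 : ℂ) - q ^ (n + 2) ≠ 0 := one_sub_pow_ne hq (n + 1)
    have hv' : (1 : ℂ) - q ^ (n + 1 + 1) ≠ 0 := one_sub_pow_ne hq (n + 1)
    have htri : 2 * tri (n + 1) = (n + 1) * (n + 2) := two_tri (n + 1)
    have htr2 : tri (n + 1 + 1) = tri (n + 1) + (n + 1) + 1 := rfl
    have e0 : 3 * (n + 2) * (n + 1) / 2 = 3 * tri (n + 1) := by
      have h1 : 3 * (n + 2) * (n + 1) = 3 * ((n + 1) * (n + 2)) := by ring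
      omega
    have e1 : 2 * (n + 2) - 1 = 2 * n + 3 := by omega
    have e2 : tri (n + 1 + 1) + (n + 1 + 1) * (n + 1) = 3 * tri (n + 1) + (n + 2) := by
      have h1 : (n + 1 + 1) * (n + 1) = (n + 1) * (n + 2) := by ring
      omega
    have e3 : tri (n + 1 + 1) + (n + 1 + 1) * (n + 1 + 1)
        = 3 * tri (n + 1) + (2 * n + 4) := by
      have h1 : (n + 1 + 1) * (n + 1 + 1) = (n + 1) * (n + 2) + (n + 2) := by ring
      omega
    have e4 : 3 * tri (n + 1 + 1) = 3 * tri (n + 1) + (3 * n + 6) := by omega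
    simp only [pp, hh]
    rw [e0, e1, e2, e3, e4]
    field_simp
    ring
  have hpp := summable_pp hq
  have h1 : HasSum (fun n => pp q (n + 1)) ((∑' j : ℕ, pp q j) - pp q 0) := by
    have h2 : HasSum (pp q) (((∑' j : ℕ, pp q j) - pp q 0) + ∑ i ∈ Finset.range 1, pp q i) := by
      simpa using hpp.hasSum
    exact (hasSum_nat_add_iff 1).mpr h2
  have h3 : HasSum (fun n => pp q (n + 1) + (hh q n - hh q (n + 1)))
      ((∑' j : ℕ, pp q j) - pp q 0 + hh q 0) := h1.add (hasSum_tel hq)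
  have hP := pnt hq
  have hS : (∑' j : ℕ, pp q j) = qPochInf q q - 1 := by rw [hP]; ring
  have hpp0 : pp q 0 = -(q + q ^ 2) := by
    show (-1 : ℂ) ^ (0 + 1) * (q ^ (tri (0 + 1) + (0 + 1) * 0) + q ^ (tri (0 + 1) + (0 + 1) * (0 + 1)))
        = -(q + q ^ 2)
    norm_num [tri]
  have hh0 : hh q 0 = q ^ 3 / (1 - q) := by
    show (-1 : ℂ) ^ 0 * q ^ (3 * tri (0 + 1)) / (1 - q ^ (0 + 1)) = q ^ 3 / (1 - q)
    norm_num [tri]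
  have h1q : (1 : ℂ) - q ≠ 0 := by
    have := one_sub_pow_ne hq 0
    simpa using this
  calc (∑' n : ℕ, ((1 - q ^ (2 * (n + 2) - 1)) / ((1 - q ^ (n + 1)) * (1 - q ^ (n + 2)))) *
          (-1) ^ (n + 2) * q ^ (3 * (n + 2) * (n + 1) / 2))
      = ∑' n : ℕ, (pp q (n + 1) + (hh q n - hh q (n + 1))) := tsum_congr perterm
    _ = (∑' j : ℕ, pp q j) - pp q 0 + hh q 0 := h3.tsum_eq
    _ = qPochInf q q - (1 - 2 * q) / (1 - q) := by
        rw [hS, hpp0, hh0]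
        field_simp
        ring
end
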